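/- Let L be a language of words over an alphabet A containing the empty word, ordered by α ≤ β iff β is a prefix of α (reverse prefix order). Then the Hasse diagram of this poset is a tree rooted at the empty word; equivalently, the comparability graph given by the covering relation is connected and acyclic. -/

import Mathlib

/-- In the reverse prefix order on `L` (where `α ≤ β` iff `β` is a prefix of `α`),
`β` covers `α` (written `hasseCover L α β`, an edge of the Hasse diagram) if `β` is a proper
prefix of `α` and no element of `L` lies strictly between them in the prefix order. -/
def hasseCover {A : Type*} (L : Set (List A)) (α β : L) : Prop :=
  (β : List A) <+: (α : List A) ∧ α ≠ β ∧
    ∀ γ : L, (β : List A) <+: (γ : List A) → (γ : List A) <+: (α : List A) → γ = β ∨ γ = α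

/-- The Hasse diagram: the simple graph on `L` whose edges are the covering pairs. -/
def hasseDiagram {A : Type*} (L : Set (List A)) : SimpleGraph L :=
  SimpleGraph.fromRel (hasseCover L)

section aux
variable {A : Type*} {L : Set (List A)}

lemma exists_cover (h : [] ∈ L) (v : L) (hv : (v : List A) ≠ []) :
    ∃ p : L, hasseCover L v p := by
  set s : Set (List A) := {β | β ∈ L ∧ β <+: (v : List A) ∧ β ≠ (v : List A)} with hs
  have hfin : s.Finite := by
    apply Set.Finite.subset ((v : List A).inits.finite_toSet)
    intro β hβ
    simpa [List.mem_inits] using hβ.2.1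
  have hne : s.Nonempty := ⟨[], h, List.nil_prefix, Ne.symm hv⟩
  obtain ⟨β, hβs, hβmax⟩ : ∃ β ∈ s, ∀ γ ∈ s, List.length β ≤ List.length γ → List.length β = List.length γ := by
    obtain ⟨β, hβs, hβm⟩ := Set.Finite.exists_maximalFor List.length s hfin hne
    exact ⟨β, hβs, fun γ hγ hle => le_antisymm hle (hβm hγ hle)⟩
  refine ⟨⟨β, hβs.1⟩, hβs.2.1, ?_, ?_⟩
  · intro hvp
    exact hβs.2.2 (by rw [hvp])
  · intro γ hβγ hγv
    by_cases hγ : (γ : List A) = (v : List A)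
    · exact Or.inr (Subtype.ext hγ)
    · have hγs : (γ : List A) ∈ s := ⟨γ.2, hγv, hγ⟩
      have := hβmax _ hγs hβγ.length_le
      exact Or.inl (Subtype.ext (hβγ.eq_of_length_le this.ge).symm)

lemma cover_unique {v p q : L} (hp : hasseCover L v p) (hq : hasseCover L v q) : p = q := by
  obtain ⟨hp1, hp2, hp3⟩ := hp
  obtain ⟨hq1, hq2, hq3⟩ := hq
  rcases List.prefix_or_prefix_of_prefix hp1 hq1 with hpq | hqp
  · rcases hp3 q hpq hq1 with h | h
    · exact h.symm
    · exact absurd h hq2.symm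
  · rcases hq3 p hqp hp1 with h | h
    · exact h
    · exact absurd h hp2.symm

lemma adj_iff {v w : L} :
    (hasseDiagram L).Adj v w ↔ v ≠ w ∧ (hasseCover L v w ∨ hasseCover L w v) :=
  SimpleGraph.fromRel_adj _ v w

lemma reach_root (h : [] ∈ L) (v : L) :
    (hasseDiagram L).Reachable v ⟨[], h⟩ := by
  have key : ∀ n (v : L), (v : List A).length = n → (hasseDiagram L).Reachable v ⟨[], h⟩ := by
    intro n
    induction n using Nat.strong_induction_on with
    | _ n ih =>
      intro v hv
      by_cases hnil : (v : List A) = []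
      · rw [show v = (⟨[], h⟩ : L) from Subtype.ext hnil]
      · obtain ⟨p, hp⟩ := exists_cover h v hnil
        have hlen : (p : List A).length < n := by
          rcases lt_or_eq_of_le hp.1.length_le with hlt | heq
          · omega
          · exact absurd (Subtype.ext (hp.1.eq_of_length_le heq.ge)) hp.2.1.symm
        have hadj : (hasseDiagram L).Adj v p := adj_iff.mpr ⟨hp.2.1, Or.inl hp⟩
        exact hadj.reachable.trans (ih _ hlen p rfl)
  exact key _ v rfl

lemma crossing_edge {α β : L} (hc : hasseCover L α β) {x z : L}
    (hadj : (hasseDiagram L).Adj x z)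
    (hx : (α : List A) <+: (x : List A)) (hz : ¬ (α : List A) <+: (z : List A)) :
    x = α ∧ z = β := by
  rcases adj_iff.mp hadj with ⟨hne, hcov | hcov⟩
  · have hzα : (z : List A) <+: (α : List A) := by
      rcases List.prefix_or_prefix_of_prefix hcov.1 hx with h1 | h1
      · exact h1
      · exact absurd h1 hz
    have hxα : x = α := by
      rcases hcov.2.2 α hzα hx with hh | hh
      · exact absurd (hh ▸ List.prefix_refl (α : List A)) hz
      · exact hh.symm
    subst hxα
    exact ⟨rfl, cover_unique hcov hc⟩
  · exact absurd (hx.trans hcov.1) hz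

lemma cover_not_reach {α β : L} (hc : hasseCover L α β) :
    ¬ ((hasseDiagram L) \ SimpleGraph.fromEdgeSet {s(α, β)}).Reachable α β := by
  set G' := (hasseDiagram L) \ SimpleGraph.fromEdgeSet {s(α, β)} with hG'
  have key : ∀ {x y : L} (_ : G'.Walk x y),
      (α : List A) <+: (x : List A) → (α : List A) <+: (y : List A) := by
    intro x y p
    induction p with
    | nil => exact id
    | cons hadj _ ih =>
      rename_i u v w hvw
      intro hu
      by_cases hv : (α : List A) <+: (v : List A)
      · exact ih hv
      · exfalso
        have hG : (hasseDiagram L).Adj u v := hadj.1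
        obtain ⟨hu', hv'⟩ := crossing_edge hc hG hu hv
        have : ¬ (SimpleGraph.fromEdgeSet {s(α, β)}).Adj u v := hadj.2
        apply this
        subst hu'; subst hv'
        simp [SimpleGraph.fromEdgeSet_adj]
        exact hc.2.1
  intro hreach
  obtain ⟨p⟩ := hreach
  have hβ : (α : List A) <+: (β : List A) := key p (List.prefix_refl _)
  exact hc.2.1 (Subtype.ext (hc.1.eq_of_length_le hβ.length_le)).symm
end aux

/-- If `L` is a language containing the empty word, then the Hasse diagram of the reverse
prefix order on `L` is a tree (connected and acyclic). -/
theorem hasseDiagram_isTree {A : Type*} (L : Set (List A)) (h : [] ∈ L) :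
    (hasseDiagram L).IsTree := by
  constructor
  · rw [SimpleGraph.connected_iff]
    refine ⟨fun v w => (reach_root h v).trans (reach_root h w).symm, ⟨⟨[], h⟩⟩⟩
  · rw [SimpleGraph.isAcyclic_iff_forall_adj_isBridge]
    intro v w hadj
    rw [SimpleGraph.isBridge_iff]
    rcases adj_iff.mp hadj with ⟨hne, hcov | hcov⟩
    · exact cover_not_reach hcov
    · rw [Sym2.eq_swap]
      exact fun hr => cover_not_reach hcov hr.symm
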